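/- Let p_1, …, p_n ∈ (0,1], set S_i := -log p_i and S_max := max_i S_i, and fix δ ∈ (0,1] and α ∈ (0,1). For each i, let B_i^1, …, B_i^k be i.i.d. Bernoulli(p_i) random variables (the indicators 1{τ(x_i^j) ≥ τ(x_i)} over k samples from the normal period), let p̂_i := (1/k) Σ_{j=1}^k B_i^j and Ŝ_i := -log p̂_i. If k ≥ 12 e^{S_max} δ^{-2} log(2n/α), then with probability at least 1 - α, simultaneously for all i ∈ {1,…,n} we have p̂_i > 0 and |Ŝ_i - S_i| < δ. (This is the paper's Lemma B.1 on the sample complexity of IT anomaly score estimation, with the constant in the sample size adjusted from 3 to 12 so that the multiplicative Chernoff bound argument is valid, using 1 - e^{-δ} ≥ δ/2 for δ ∈ (0,1].) -/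

import Mathlib

open MeasureTheory ProbabilityTheory Real Finset

lemma tail_up_aux12 {δ : ℝ} (hδ0 : 0 < δ) (hδ1 : δ ≤ 1) :
    δ ^ 2 / 6 ≤ δ * Real.exp δ - Real.exp δ + 1 := by
  have h1 : δ + 1 ≤ Real.exp δ := Real.add_one_le_exp δ
  have h2 := Real.exp_bound (x := δ) (by rw [abs_of_pos hδ0]; exact hδ1) (n := 2) (by norm_num)
  rw [abs_of_pos hδ0, abs_le] at h2
  norm_num [Finset.sum_range_succ] at h2
  nlinarith [h2.1, h2.2, sq_nonneg δ]

lemma tail_lo_aux12 {δ : ℝ} (hδ0 : 0 < δ) (hδ1 : δ ≤ 1) :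
    δ ^ 2 / 6 ≤ 1 - Real.exp (-δ) - δ * Real.exp (-δ) := by
  have h2 := Real.exp_bound (x := -δ) (by rw [abs_neg, abs_of_pos hδ0]; exact hδ1) (n := 5)
    (by norm_num)
  rw [abs_neg, abs_of_pos hδ0, abs_le] at h2
  norm_num [Finset.sum_range_succ, Nat.factorial] at h2
  have hP : Real.exp (-δ) ≤ 1 - δ + δ^2/2 - δ^3/6 + δ^4/24 + δ^5/100 := by nlinarith [h2.2]
  have h3 : (1 + δ) * Real.exp (-δ) ≤ (1 + δ) * (1 - δ + δ^2/2 - δ^3/6 + δ^4/24 + δ^5/100) :=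
    mul_le_mul_of_nonneg_left hP (by linarith)
  have p3 : δ^3 ≤ δ^2 := by nlinarith
  have p5 : δ^5 ≤ δ^4 := by nlinarith [pow_pos hδ0 4]
  have p6 : δ^6 ≤ δ^4 := by nlinarith [pow_pos hδ0 4, pow_le_one₀ hδ0.le hδ1 (n := 2), pow_pos hδ0 2]
  nlinarith [h3, hP, mul_pos hδ0 (Real.exp_pos (-δ))]

lemma bern_int_aux12 {Ω : Type*} [MeasurableSpace Ω] (μ : Measure Ω) [IsProbabilityMeasure μ]
    {X : Ω → ℝ} (hX : Measurable X) (h01 : ∀ ω, X ω = 0 ∨ X ω = 1)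
    {q : ℝ} (hq0 : 0 ≤ q) (hlaw : μ {ω | X ω = 1} = ENNReal.ofReal q) :
    Integrable X μ ∧ ∫ ω, X ω ∂μ = q := by
  have hs : MeasurableSet {ω | X ω = 1} := hX (measurableSet_singleton 1)
  have hXind : X = Set.indicator {ω | X ω = 1} (fun _ => (1:ℝ)) := by
    funext ω
    rcases h01 ω with h | h <;> simp [Set.indicator_apply, Set.mem_setOf_eq, h]
  constructor
  · rw [hXind]; exact (integrable_const (1:ℝ)).indicator hs
  · conv_lhs => rw [hXind]
    rw [integral_indicator_const (1:ℝ) hs, measureReal_def, hlaw, smul_eq_mul, mul_one,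
      ENNReal.toReal_ofReal hq0]

lemma bern_mgf_aux12 {Ω : Type*} [MeasurableSpace Ω] (μ : Measure Ω) [IsProbabilityMeasure μ]
    {X : Ω → ℝ} (hX : Measurable X) (h01 : ∀ ω, X ω = 0 ∨ X ω = 1)
    {q : ℝ} (hq0 : 0 ≤ q) (hlaw : μ {ω | X ω = 1} = ENNReal.ofReal q) (t : ℝ) :
    mgf X μ t = 1 + q * (Real.exp t - 1) := by
  obtain ⟨hint, hval⟩ := bern_int_aux12 μ hX h01 hq0 hlaw
  have hexp : (fun ω => Real.exp (t * X ω)) = fun ω => 1 + (Real.exp t - 1) * X ω := by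
    funext ω
    rcases h01 ω with h | h
    · simp [h]
    · rw [h]; simp
  simp only [mgf, hexp]
  rw [integral_add (integrable_const 1) (hint.const_mul _), integral_const,
    integral_const_mul, hval]
  simp [mul_comm]

/-- Paper's Lemma B.1, sample complexity of IT anomaly score estimation,
with constant 12. Let `p 0, …, p (n-1) ∈ (0,1]`, `S i = -log (p i)`,
`Smax = max_i S i`, `δ ∈ (0,1]`, `α ∈ (0,1)`. For each `i` let `B i 0, …, B i (k-1)` be
i.i.d. `Bernoulli (p i)` indicators, `p̂ i = (1/k) Σ_j B i j` and `Ŝ i = -log (p̂ i)`. If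
`k ≥ 12 e^{Smax} δ⁻² log (2n/α)`, then with probability at least `1 - α`, simultaneously
for all `i`, `p̂ i > 0` and `|Ŝ i - S i| < δ`. -/
theorem it_score_estimation_sample_complexity
    {Ω : Type*} [MeasurableSpace Ω] (μ : Measure Ω) [IsProbabilityMeasure μ]
    (n k : ℕ) (hn : 0 < n)
    (p : Fin n → ℝ) (hp0 : ∀ i, 0 < p i) (hp1 : ∀ i, p i ≤ 1)
    (S : Fin n → ℝ) (hS : ∀ i, S i = -Real.log (p i))
    (Smax : ℝ)
    (hSmax : Smax = Finset.univ.sup' (Finset.univ_nonempty_iff.mpr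
      (Fin.pos_iff_nonempty.mp hn)) S)
    (δ : ℝ) (hδ0 : 0 < δ) (hδ1 : δ ≤ 1)
    (α : ℝ) (hα0 : 0 < α) (hα1 : α < 1)
    (B : Fin n → Fin k → Ω → ℝ) (hBmeas : ∀ i j, Measurable (B i j))
    (hB01 : ∀ i j ω, B i j ω = 0 ∨ B i j ω = 1)
    (hBlaw : ∀ i j, μ {ω | B i j ω = 1} = ENNReal.ofReal (p i))
    (hBindep : ∀ i, iIndepFun (B i) μ)
    (phat : Fin n → Ω → ℝ)
    (hphat : ∀ i ω, phat i ω = (1 / (k : ℝ)) * ∑ j : Fin k, B i j ω)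
    (Shat : Fin n → Ω → ℝ)
    (hShat : ∀ i ω, Shat i ω = -Real.log (phat i ω))
    (hk : (k : ℝ) ≥ 12 * Real.exp Smax / δ ^ 2 * Real.log (2 * n / α)) :
    μ {ω | ∀ i, 0 < phat i ω ∧ |Shat i ω - S i| < δ}
      ≥ ENNReal.ofReal (1 - α) := by
  have hn1 : (1:ℝ) ≤ n := by exact_mod_cast hn
  have hnR : (0:ℝ) < n := by linarith
  -- L = log (2n/α) > 0
  set L : ℝ := Real.log (2 * n / α) with hLdef
  have hL : 0 < L := Real.log_pos (by rw [lt_div_iff₀ hα0]; nlinarith)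
  have hkpos : (0:ℝ) < k := lt_of_lt_of_le (by positivity) hk
  have hkne : (k : ℝ) ≠ 0 := ne_of_gt hkpos
  -- sums
  set T : Fin n → Ω → ℝ := fun i => ∑ j : Fin k, B i j with hTdef
  have hTapp : ∀ i ω, T i ω = ∑ j : Fin k, B i j ω := by
    intro i ω; simp [hTdef]
  have hTfun : ∀ i, T i = fun ω => ∑ j : Fin k, B i j ω := fun i => funext (hTapp i)
  have hTmeas : ∀ i, Measurable (T i) := by
    intro i
    rw [hTfun]
    exact Finset.measurable_sum _ fun j _ => hBmeas i j
  have hTrange : ∀ i ω, 0 ≤ T i ω ∧ T i ω ≤ (k : ℝ) := by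
    intro i ω
    rw [hTapp]
    constructor
    · exact Finset.sum_nonneg fun j _ => by rcases hB01 i j ω with h | h <;> simp [h]
    · calc ∑ j : Fin k, B i j ω ≤ ∑ j : Fin k, (1:ℝ) := by
            refine Finset.sum_le_sum fun j _ => ?_
            rcases hB01 i j ω with h | h <;> simp [h]
        _ = (k : ℝ) := by simp
  -- integrability of exp (t * T i)
  have hTint : ∀ i t, Integrable (fun ω => Real.exp (t * T i ω)) μ := by
    intro i t
    refine Integrable.mono' (integrable_const (Real.exp (|t| * k)))
      (((hTmeas i).const_mul t).exp.aestronglyMeasurable) (ae_of_all _ fun ω => ?_)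
    rw [Real.norm_eq_abs, abs_of_pos (Real.exp_pos _)]
    apply Real.exp_le_exp.2
    obtain ⟨h0, h1⟩ := hTrange i ω
    calc t * T i ω ≤ |t| * T i ω := mul_le_mul_of_nonneg_right (le_abs_self t) h0
      _ ≤ |t| * k := mul_le_mul_of_nonneg_left h1 (abs_nonneg t)
  -- mgf bound
  have hmgf : ∀ i t, mgf (T i) μ t ≤ Real.exp ((k : ℝ) * (p i * (Real.exp t - 1))) := by
    intro i t
    have h1 : mgf (T i) μ t = ∏ j : Fin k, mgf (B i j) μ t :=
      (hBindep i).mgf_sum (hBmeas i) Finset.univ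
    have h2 : ∀ j : Fin k, mgf (B i j) μ t = 1 + p i * (Real.exp t - 1) := fun j =>
      bern_mgf_aux12 μ (hBmeas i j) (hB01 i j) (hp0 i).le (hBlaw i j) t
    have hbase : 0 ≤ 1 + p i * (Real.exp t - 1) := by
      nlinarith [Real.exp_pos t, hp0 i, hp1 i, mul_pos (hp0 i) (Real.exp_pos t)]
    calc mgf (T i) μ t = (1 + p i * (Real.exp t - 1)) ^ k := by
          rw [h1]; simp [h2]
      _ ≤ (Real.exp (p i * (Real.exp t - 1))) ^ k := by
          apply pow_le_pow_left₀ hbase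
          linarith [Real.add_one_le_exp (p i * (Real.exp t - 1))]
      _ = Real.exp ((k : ℝ) * (p i * (Real.exp t - 1))) := by
          rw [Real.exp_nat_mul]
  -- p i ≥ exp (-Smax)
  have hpmin : ∀ i, Real.exp (-Smax) ≤ p i := by
    intro i
    have h1 : S i ≤ Smax := by rw [hSmax]; exact Finset.le_sup' S (Finset.mem_univ i)
    rw [hS] at h1
    have := Real.exp_log (hp0 i)
    calc Real.exp (-Smax) ≤ Real.exp (Real.log (p i)) := Real.exp_le_exp.2 (by linarith)
      _ = p i := Real.exp_log (hp0 i)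
  -- key exponent bound: exp (-(k * p i * δ^2 / 6)) ≤ α / (2 * n)
  have hexpkey : ∀ i, Real.exp (-((k : ℝ) * p i * δ ^ 2 / 6)) ≤ α / (2 * n) := by
    intro i
    have hkd : 12 * Real.exp Smax * L ≤ (k : ℝ) * δ ^ 2 := by
      have hk' : 12 * Real.exp Smax * L / δ ^ 2 ≤ (k : ℝ) := by
        calc 12 * Real.exp Smax * L / δ ^ 2 = 12 * Real.exp Smax / δ ^ 2 * L := by ring
          _ ≤ (k : ℝ) := hk
      rw [div_le_iff₀ (by positivity)] at hk'
      linarith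
    have hq := hpmin i
    have hE : Real.exp Smax * Real.exp (-Smax) = 1 := by
      rw [← Real.exp_add]; simp
    have h6 : L ≤ (k : ℝ) * p i * δ ^ 2 / 6 := by
      have h7 : 12 * Real.exp Smax * L * Real.exp (-Smax) ≤ (k : ℝ) * δ ^ 2 * p i :=
        mul_le_mul hkd hq (Real.exp_pos _).le (by positivity)
      have h8 : 12 * Real.exp Smax * L * Real.exp (-Smax) = 12 * L := by
        linear_combination 12 * L * hE
      nlinarith
    calc Real.exp (-((k : ℝ) * p i * δ ^ 2 / 6)) ≤ Real.exp (-L) :=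
          Real.exp_le_exp.2 (by linarith)
      _ = α / (2 * n) := by
          rw [hLdef, ← Real.log_inv, Real.exp_log (inv_pos.2 (div_pos (by linarith) hα0)),
            inv_div]
  -- upper tail
  have hup : ∀ i, μ {ω | (k : ℝ) * p i * Real.exp δ ≤ T i ω} ≤ ENNReal.ofReal (α / (2 * n)) := by
    intro i
    have hch := measure_ge_le_exp_mul_mgf (μ := μ) (X := T i) ((k : ℝ) * p i * Real.exp δ)
      hδ0.le (hTint i δ)
    have hbd : Real.exp (-δ * ((k : ℝ) * p i * Real.exp δ)) * mgf (T i) μ δ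
        ≤ α / (2 * n) := by
      calc Real.exp (-δ * ((k : ℝ) * p i * Real.exp δ)) * mgf (T i) μ δ
          ≤ Real.exp (-δ * ((k : ℝ) * p i * Real.exp δ)) *
            Real.exp ((k : ℝ) * (p i * (Real.exp δ - 1))) :=
            mul_le_mul_of_nonneg_left (hmgf i δ) (Real.exp_pos _).le
        _ = Real.exp ((k : ℝ) * p i * (-(δ * Real.exp δ - Real.exp δ + 1))) := by
            rw [← Real.exp_add]; ring_nf
        _ ≤ Real.exp (-((k : ℝ) * p i * δ ^ 2 / 6)) := by
            apply Real.exp_le_exp.2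
            have h1 := tail_up_aux12 hδ0 hδ1
            have h2 : 0 ≤ (k : ℝ) * p i := mul_nonneg (Nat.cast_nonneg k) (hp0 i).le
            nlinarith
        _ ≤ α / (2 * n) := hexpkey i
    rw [← ENNReal.ofReal_toReal (measure_ne_top μ _)]
    exact ENNReal.ofReal_le_ofReal (le_trans hch hbd)
  -- lower tail
  have hlo : ∀ i, μ {ω | T i ω ≤ (k : ℝ) * p i * Real.exp (-δ)} ≤
      ENNReal.ofReal (α / (2 * n)) := by
    intro i
    have hch := measure_le_le_exp_mul_mgf (μ := μ) (X := T i) ((k : ℝ) * p i * Real.exp (-δ))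
      (neg_nonpos.2 hδ0.le) (hTint i (-δ))
    have hbd : Real.exp (-(-δ) * ((k : ℝ) * p i * Real.exp (-δ))) * mgf (T i) μ (-δ)
        ≤ α / (2 * n) := by
      calc Real.exp (-(-δ) * ((k : ℝ) * p i * Real.exp (-δ))) * mgf (T i) μ (-δ)
          ≤ Real.exp (δ * ((k : ℝ) * p i * Real.exp (-δ))) *
            Real.exp ((k : ℝ) * (p i * (Real.exp (-δ) - 1))) := by
            rw [neg_neg]
            exact mul_le_mul_of_nonneg_left (hmgf i (-δ)) (Real.exp_pos _).le
        _ = Real.exp ((k : ℝ) * p i * (-(1 - Real.exp (-δ) - δ * Real.exp (-δ)))) := by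
            rw [← Real.exp_add]; ring_nf
        _ ≤ Real.exp (-((k : ℝ) * p i * δ ^ 2 / 6)) := by
            apply Real.exp_le_exp.2
            have h1 := tail_lo_aux12 hδ0 hδ1
            have h2 : 0 ≤ (k : ℝ) * p i := mul_nonneg (Nat.cast_nonneg k) (hp0 i).le
            nlinarith
        _ ≤ α / (2 * n) := hexpkey i
    rw [← ENNReal.ofReal_toReal (measure_ne_top μ _)]
    exact ENNReal.ofReal_le_ofReal (le_trans hch hbd)
  -- the bad event and its bound
  set bad : Set Ω := ⋃ i : Fin n, ({ω | T i ω ≤ (k : ℝ) * p i * Real.exp (-δ)} ∪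
    {ω | (k : ℝ) * p i * Real.exp δ ≤ T i ω}) with hbaddef
  have hbad : μ bad ≤ ENNReal.ofReal α := by
    calc μ bad ≤ ∑' i : Fin n, μ ({ω | T i ω ≤ (k : ℝ) * p i * Real.exp (-δ)} ∪
          {ω | (k : ℝ) * p i * Real.exp δ ≤ T i ω}) := measure_iUnion_le _
      _ = ∑ i : Fin n, μ ({ω | T i ω ≤ (k : ℝ) * p i * Real.exp (-δ)} ∪
          {ω | (k : ℝ) * p i * Real.exp δ ≤ T i ω}) := tsum_fintype _
      _ ≤ ∑ i : Fin n, ENNReal.ofReal (α / n) := by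
          refine Finset.sum_le_sum fun i _ => ?_
          calc μ _ ≤ μ {ω | T i ω ≤ (k : ℝ) * p i * Real.exp (-δ)} +
                μ {ω | (k : ℝ) * p i * Real.exp δ ≤ T i ω} := measure_union_le _ _
            _ ≤ ENNReal.ofReal (α / (2 * n)) + ENNReal.ofReal (α / (2 * n)) :=
                add_le_add (hlo i) (hup i)
            _ = ENNReal.ofReal (α / n) := by
                rw [← ENNReal.ofReal_add (div_nonneg hα0.le (by positivity))
                  (div_nonneg hα0.le (by positivity))]
                congr 1
                field_simp
                ring
      _ = ENNReal.ofReal α := by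
          rw [Finset.sum_const, Finset.card_univ, Fintype.card_fin, nsmul_eq_mul]
          rw [← ENNReal.ofReal_natCast n, ← ENNReal.ofReal_mul (Nat.cast_nonneg n)]
          congr 1
          field_simp
  -- complement inclusion
  have hsub : {ω | ∀ i, 0 < phat i ω ∧ |Shat i ω - S i| < δ}ᶜ ⊆ bad := by
    intro ω hω
    by_contra hnot
    apply hω
    simp only [hbaddef, Set.mem_iUnion, Set.mem_union, Set.mem_setOf_eq, not_exists,
      not_or] at hnot
    intro i
    obtain ⟨h1, h2⟩ := hnot i
    push_neg at h1 h2
    have hTlo : (k : ℝ) * p i * Real.exp (-δ) < T i ω := h1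
    have hThi : T i ω < (k : ℝ) * p i * Real.exp δ := h2
    have hphat' : phat i ω = T i ω / k := by
      rw [hphat, hTapp]; ring
    have hplo : p i * Real.exp (-δ) < phat i ω := by
      rw [hphat', lt_div_iff₀ hkpos]
      calc p i * Real.exp (-δ) * k = (k : ℝ) * p i * Real.exp (-δ) := by ring
        _ < T i ω := hTlo
    have hphi : phat i ω < p i * Real.exp δ := by
      rw [hphat', div_lt_iff₀ hkpos]
      calc T i ω < (k : ℝ) * p i * Real.exp δ := hThi
        _ = p i * Real.exp δ * k := by ring
    have hppos : 0 < phat i ω := lt_trans (mul_pos (hp0 i) (Real.exp_pos _)) hplo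
    refine ⟨hppos, ?_⟩
    rw [hShat, hS, abs_lt]
    have hlog1 : Real.log (phat i ω) < Real.log (p i) + δ := by
      calc Real.log (phat i ω) < Real.log (p i * Real.exp δ) :=
            Real.log_lt_log hppos hphi
        _ = Real.log (p i) + δ := by
            rw [Real.log_mul (ne_of_gt (hp0 i)) (Real.exp_ne_zero δ), Real.log_exp]
    have hlog2 : Real.log (p i) - δ < Real.log (phat i ω) := by
      calc Real.log (p i) - δ = Real.log (p i * Real.exp (-δ)) := by
            rw [Real.log_mul (ne_of_gt (hp0 i)) (Real.exp_ne_zero (-δ)), Real.log_exp]; ring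
        _ < Real.log (phat i ω) := Real.log_lt_log (mul_pos (hp0 i) (Real.exp_pos _)) hplo
    constructor <;> linarith
  -- conclude
  have hcompl : μ {ω | ∀ i, 0 < phat i ω ∧ |Shat i ω - S i| < δ}ᶜ ≤ ENNReal.ofReal α :=
    le_trans (measure_mono hsub) hbad
  have hunion : (1 : ENNReal) ≤ μ {ω | ∀ i, 0 < phat i ω ∧ |Shat i ω - S i| < δ} +
      μ {ω | ∀ i, 0 < phat i ω ∧ |Shat i ω - S i| < δ}ᶜ := by
    rw [← measure_univ (μ := μ), ← Set.union_compl_self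
      {ω | ∀ i, 0 < phat i ω ∧ |Shat i ω - S i| < δ}]
    exact measure_union_le _ _
  have h1 : (1 : ENNReal) ≤ μ {ω | ∀ i, 0 < phat i ω ∧ |Shat i ω - S i| < δ} +
      ENNReal.ofReal α := le_trans hunion (add_le_add_right hcompl _)
  rw [ge_iff_le]
  have : ENNReal.ofReal (1 - α) = 1 - ENNReal.ofReal α := by
    rw [← ENNReal.ofReal_one, ← ENNReal.ofReal_sub _ hα0.le]
  rw [this]
  exact tsub_le_iff_right.2 h1
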